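/- If a finite median graph G has n vertices, m edges, and dimension d (the largest d such that G contains an induced subgraph isomorphic to the hypercube Q_d), then m ≤ d·n and d·n ≤ n·log₂ n (for n ≥ 2). In particular, if G is a cube-free median graph then m ≤ 2n. -/

import Mathlib

open SimpleGraph Set

/-- The metric interval `I(u,v)` in a graph `G`. -/
def gInterval {V : Type*} (G : SimpleGraph V) (u v : V) : Set V :=
  {w | G.dist u w + G.dist w v = G.dist u v}

/-- A median graph: a connected graph in which every triplet of vertices has a
unique median, i.e. a unique vertex in `I(x,y) ∩ I(y,z) ∩ I(z,x)`. -/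
def MedianGraph {V : Type*} (G : SimpleGraph V) : Prop :=
  G.Connected ∧ ∀ x y z : V,
    ∃! m : V, m ∈ gInterval G x y ∧ m ∈ gInterval G y z ∧ m ∈ gInterval G z x

/-- `G` contains an induced `d`-dimensional hypercube all of whose vertices lie in `S`. -/
def HasCubeIn {V : Type*} (G : SimpleGraph V) (d : ℕ) (S : Set V) : Prop :=
  ∃ f : Finset (Fin d) → V, Function.Injective f ∧ (∀ A, f A ∈ S) ∧
    ∀ A B : Finset (Fin d), G.Adj (f A) (f B) ↔ (symmDiff A B).card = 1

/-- `G` contains an induced `d`-dimensional hypercube `Q_d`. -/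
def HasInducedCube {V : Type*} (G : SimpleGraph V) (d : ℕ) : Prop :=
  HasCubeIn G d Set.univ

/-- A cube-free (median) graph: no induced 3-dimensional hypercube. -/
def CubeFree {V : Type*} (G : SimpleGraph V) : Prop :=
  ¬ HasInducedCube G 3

/-- `g` is a gate of `v` in the set `S`. -/
def IsGate {V : Type*} (G : SimpleGraph V) (S : Set V) (v g : V) : Prop :=
  g ∈ S ∧ ∀ u ∈ S, G.dist v u = G.dist v g + G.dist g u

/-- A set of vertices is gated if every vertex has a gate in it. -/
def Gated {V : Type*} (G : SimpleGraph V) (S : Set V) : Prop :=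
  ∀ v : V, ∃ g : V, IsGate G S v g

/-- A set of vertices is convex if it contains the interval between any two of its members. -/
def GConvex {V : Type*} (G : SimpleGraph V) (S : Set V) : Prop :=
  ∀ u ∈ S, ∀ v ∈ S, gInterval G u v ⊆ S

/-- The star `St(z)`: the set of vertices lying in some induced hypercube of `G`
containing `z`. -/
def gStar {V : Type*} (G : SimpleGraph V) (z : V) : Set V :=
  {v | ∃ (d : ℕ) (f : Finset (Fin d) → V), Function.Injective f ∧
      (∀ A B : Finset (Fin d), G.Adj (f A) (f B) ↔ (symmDiff A B).card = 1) ∧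
      (∃ A, f A = z) ∧ (∃ A, f A = v)}

/-- The fiber `F(x)` of `x` with respect to a (gated) set `H`: all vertices having `x`
as their gate in `H`. -/
def fiber {V : Type*} (G : SimpleGraph V) (H : Set V) (x : V) : Set V :=
  {v | IsGate G H v x}

/-- Two fibers are neighboring when an edge of `G` joins them. -/
def Neighboring {V : Type*} (G : SimpleGraph V) (H : Set V) (x y : V) : Prop :=
  ∃ a ∈ fiber G H x, ∃ b ∈ fiber G H y, G.Adj a b

/-- The boundary `∂_y F(x)`: vertices of `F(x)` having a neighbor in `F(y)`. -/
def bdry {V : Type*} (G : SimpleGraph V) (H : Set V) (x y : V) : Set V :=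
  {a | a ∈ fiber G H x ∧ ∃ b ∈ fiber G H y, G.Adj a b}

/-- The total boundary `∂*F(x)`: union of the boundaries `∂_y F(x)` over all `y ∈ H`
adjacent to `x`. -/
def totalBdry {V : Type*} (G : SimpleGraph V) (H : Set V) (x : V) : Set V :=
  ⋃ (y : V) (_ : y ∈ H ∧ G.Adj x y), bdry G H x y

/-- The imprint set of `u` on `A`. -/
def imprints {V : Type*} (G : SimpleGraph V) (u : V) (A : Set V) : Set V :=
  {a ∈ A | gInterval G u a ∩ A = {a}}

/-- The halfspace `W(u,v)` associated with an edge `uv`. -/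
def halfspaceW {V : Type*} (G : SimpleGraph V) (u v : V) : Set V :=
  {z | G.dist z u < G.dist z v}

section MedianBasics

variable {V : Type*} {G : SimpleGraph V}

lemma mem_gInterval' {u v w : V} :
    w ∈ gInterval G u v ↔ G.dist u w + G.dist w v = G.dist u v := Iff.rfl

lemma dist_comm' (G : SimpleGraph V) (a b : V) : G.dist a b = G.dist b a :=
  SimpleGraph.dist_comm

/-- The unique median of a triple. -/
noncomputable def gmed (hG : MedianGraph G) (x y z : V) : V := (hG.2 x y z).choose

lemma gmed_spec (hG : MedianGraph G) (x y z : V) :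
    gmed hG x y z ∈ gInterval G x y ∧ gmed hG x y z ∈ gInterval G y z ∧
      gmed hG x y z ∈ gInterval G z x := (hG.2 x y z).choose_spec.1

lemma gmed_eq (hG : MedianGraph G) {x y z m : V}
    (h : m ∈ gInterval G x y ∧ m ∈ gInterval G y z ∧ m ∈ gInterval G z x) :
    m = gmed hG x y z := (hG.2 x y z).choose_spec.2 m h

/-- The base-point order: `x` lies on a geodesic from `z` to `y`. -/
def vle (G : SimpleGraph V) (z x y : V) : Prop :=
  G.dist z x + G.dist x y = G.dist z y

lemma vle_refl (z x : V) : vle G z x x := by simp [vle]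

lemma vle_trans (hG : MedianGraph G) {z x y w : V} (h1 : vle G z x y) (h2 : vle G z y w) :
    vle G z x w := by
  have t1 : G.dist z w ≤ G.dist z x + G.dist x w := hG.1.dist_triangle
  have t2 : G.dist x w ≤ G.dist x y + G.dist y w := hG.1.dist_triangle
  unfold vle at *
  omega

lemma vle_dist_le {z x y : V} (h : vle G z x y) :
    G.dist z x ≤ G.dist z y := by unfold vle at h; omega

lemma eq_of_vle_of_dist_eq (hG : MedianGraph G) {z x y : V} (h : vle G z x y)
    (hd : G.dist z x = G.dist z y) : x = y := by
  have : G.dist x y = 0 := by unfold vle at h; omega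
  exact (hG.1.dist_eq_zero_iff).mp this

lemma vle_antisymm (hG : MedianGraph G) {z x y : V} (h1 : vle G z x y) (h2 : vle G z y x) :
    x = y :=
  eq_of_vle_of_dist_eq hG h1 (le_antisymm (vle_dist_le h1) (vle_dist_le h2))

/-- The meet of `x` and `y` with respect to base point `z`. -/
noncomputable def gmeet (hG : MedianGraph G) (z x y : V) : V := gmed hG x y z

lemma gmeet_le_left (hG : MedianGraph G) (z x y : V) : vle G z (gmeet hG z x y) x :=
  (gmed_spec hG x y z).2.2

lemma gmeet_le_right (hG : MedianGraph G) (z x y : V) : vle G z (gmeet hG z x y) y := by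
  unfold gmeet
  have h := (gmed_spec hG x y z).2.1
  rw [mem_gInterval'] at h
  unfold vle
  rw [dist_comm' G z (gmed hG x y z), dist_comm' G (gmed hG x y z) y, dist_comm' G z y]
  omega

lemma gmeet_interval (hG : MedianGraph G) (z x y : V) :
    G.dist x (gmeet hG z x y) + G.dist (gmeet hG z x y) y = G.dist x y :=
  (gmed_spec hG x y z).1

lemma vle_gmeet (hG : MedianGraph G) {z w x y : V} (h1 : vle G z w x) (h2 : vle G z w y) :
    vle G z w (gmeet hG z x y) := by
  set p := gmed hG x y w with hp
  have hs := gmed_spec hG x y w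
  have hxy : G.dist x p + G.dist p y = G.dist x y := hs.1
  have hyw : G.dist y p + G.dist p w = G.dist y w := hs.2.1
  have hwx : G.dist w p + G.dist p x = G.dist w x := hs.2.2
  have t1 : G.dist y z ≤ G.dist y p + G.dist p z := hG.1.dist_triangle
  have t2 : G.dist p z ≤ G.dist p w + G.dist w z := hG.1.dist_triangle
  have t3 : G.dist z p ≤ G.dist z w + G.dist w p := hG.1.dist_triangle
  have t4 : G.dist z x ≤ G.dist z p + G.dist p x := hG.1.dist_triangle
  have h1' : G.dist z w + G.dist w x = G.dist z x := h1
  have h2' : G.dist z w + G.dist w y = G.dist z y := h2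
  have c1 : G.dist w x = G.dist x w := dist_comm' G _ _
  have c2 : G.dist w y = G.dist y w := dist_comm' G _ _
  have c3 : G.dist z y = G.dist y z := dist_comm' G _ _
  have c4 : G.dist z p = G.dist p z := dist_comm' G _ _
  have c5 : G.dist w p = G.dist p w := dist_comm' G _ _
  have c6 : G.dist z w = G.dist w z := dist_comm' G _ _
  have hyz : G.dist y p + G.dist p z = G.dist y z := by omega
  have hzx : G.dist z p + G.dist p x = G.dist z x := by omega
  have hpmed : p = gmed hG x y z := gmed_eq hG ⟨hxy, hyz, hzx⟩
  have : G.dist z w + G.dist w p = G.dist z p := by omega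
  unfold vle gmeet
  rw [← hpmed]
  exact this

lemma gmeet_comm (hG : MedianGraph G) (z x y : V) : gmeet hG z x y = gmeet hG z y x := by
  unfold gmeet
  apply gmed_eq hG
  have h1 := (gmed_spec hG x y z).1
  have h2 := (gmed_spec hG x y z).2.1
  have h3 := (gmed_spec hG x y z).2.2
  rw [mem_gInterval'] at h1 h2 h3
  refine ⟨?_, ?_, ?_⟩ <;> rw [mem_gInterval']
  · rw [dist_comm' G y (gmed hG x y z), dist_comm' G (gmed hG x y z) x, dist_comm' G y x]
    omega
  · rw [dist_comm' G x (gmed hG x y z), dist_comm' G (gmed hG x y z) z, dist_comm' G x z]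
    omega
  · rw [dist_comm' G z (gmed hG x y z), dist_comm' G (gmed hG x y z) y, dist_comm' G z y]
    omega

lemma gmeet_eq_left (hG : MedianGraph G) {z x y : V} (h : vle G z x y) :
    gmeet hG z x y = x :=
  vle_antisymm hG (gmeet_le_left hG z x y) (vle_gmeet hG (vle_refl z x) h)

lemma gmeet_assoc (hG : MedianGraph G) (z a b c : V) :
    gmeet hG z (gmeet hG z a b) c = gmeet hG z a (gmeet hG z b c) := by
  apply vle_antisymm hG
  · apply vle_gmeet hG
    · exact vle_trans hG (gmeet_le_left hG z _ c) (gmeet_le_left hG z a b)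
    · apply vle_gmeet hG
      · exact vle_trans hG (gmeet_le_left hG z _ c) (gmeet_le_right hG z a b)
      · exact gmeet_le_right hG z _ c
  · apply vle_gmeet hG
    · apply vle_gmeet hG
      · exact gmeet_le_left hG z a _
      · exact vle_trans hG (gmeet_le_right hG z a _) (gmeet_le_left hG z b c)
    · exact vle_trans hG (gmeet_le_right hG z a _) (gmeet_le_right hG z b c)

lemma gmeet_left_comm (hG : MedianGraph G) (z a b c : V) :
    gmeet hG z a (gmeet hG z b c) = gmeet hG z b (gmeet hG z a c) := by
  rw [← gmeet_assoc, gmeet_comm hG z a b, gmeet_assoc]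

lemma gmeet_absorb (hG : MedianGraph G) {z a x q : V} (h : vle G z a x) :
    gmeet hG z a (gmeet hG z x q) = gmeet hG z a q := by
  apply vle_antisymm hG
  · apply vle_gmeet hG
    · exact gmeet_le_left hG z a _
    · exact vle_trans hG (gmeet_le_right hG z a _) (gmeet_le_right hG z x q)
  · apply vle_gmeet hG
    · exact gmeet_le_left hG z a q
    · apply vle_gmeet hG
      · exact vle_trans hG (gmeet_le_left hG z a q) h
      · exact gmeet_le_right hG z a q

end MedianBasics

section MedianGraphLemmas

variable {V : Type*} {G : SimpleGraph V}

lemma adj_dist_ne (hG : MedianGraph G) (z : V) {a b : V} (hab : G.Adj a b) :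
    G.dist z a ≠ G.dist z b := by
  intro heq
  have hd1 : G.dist a b = 1 := SimpleGraph.dist_eq_one_iff_adj.mpr hab
  set m := gmed hG a b z with hm
  have h1 : G.dist a m + G.dist m b = G.dist a b := (gmed_spec hG a b z).1
  have h2 : G.dist b m + G.dist m z = G.dist b z := (gmed_spec hG a b z).2.1
  have h3 : G.dist z m + G.dist m a = G.dist z a := (gmed_spec hG a b z).2.2
  have hma : G.dist a m = 0 ∨ G.dist m b = 0 := by omega
  rcases hma with h | h
  · have hme : a = m := (hG.1.dist_eq_zero_iff).mp h
    rw [← hme] at h2 h3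
    have cb : G.dist b a = 1 := by rw [dist_comm']; exact hd1
    have cz : G.dist a z = G.dist z a := dist_comm' G _ _
    have cbz : G.dist b z = G.dist z b := dist_comm' G _ _
    omega
  · have hme : m = b := (hG.1.dist_eq_zero_iff).mp h
    rw [hme] at h3
    have cb : G.dist b a = 1 := by rw [dist_comm']; exact hd1
    omega

lemma adj_vert (hG : MedianGraph G) (z : V) {a b : V} (hab : G.Adj a b) :
    G.dist z a + 1 = G.dist z b ∨ G.dist z b + 1 = G.dist z a := by
  have hd1 : G.dist a b = 1 := SimpleGraph.dist_eq_one_iff_adj.mpr hab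
  have t1 : G.dist z b ≤ G.dist z a + G.dist a b := hG.1.dist_triangle
  have t2 : G.dist z a ≤ G.dist z b + G.dist b a := hG.1.dist_triangle
  have c : G.dist b a = 1 := by rw [dist_comm']; exact hd1
  have hne := adj_dist_ne hG z hab
  omega

lemma dist_two (hG : MedianGraph G) (z : V) {x a b : V} (hab : a ≠ b)
    (ha : G.Adj x a) (hb : G.Adj x b) (hl : G.dist z a = G.dist z b) :
    G.dist a b = 2 := by
  have t : G.dist a b ≤ G.dist a x + G.dist x b := hG.1.dist_triangle
  have hax : G.dist a x = 1 := SimpleGraph.dist_eq_one_iff_adj.mpr ha.symm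
  have hxb : G.dist x b = 1 := SimpleGraph.dist_eq_one_iff_adj.mpr hb
  have hne0 : G.dist a b ≠ 0 := fun h => hab ((hG.1.dist_eq_zero_iff).mp h)
  have hne1 : G.dist a b ≠ 1 := by
    intro h
    exact adj_dist_ne hG z (SimpleGraph.dist_eq_one_iff_adj.mp h) hl
  omega

lemma downstep (hG : MedianGraph G) (z : V) {x a b : V} (hab : a ≠ b)
    (ha : G.Adj x a) (hb : G.Adj x b)
    (hla : G.dist z a + 1 = G.dist z x) (hlb : G.dist z b + 1 = G.dist z x) :
    G.Adj a (gmeet hG z a b) ∧ G.Adj b (gmeet hG z a b) ∧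
      G.dist z (gmeet hG z a b) + 2 = G.dist z x := by
  have hl : G.dist z a = G.dist z b := by omega
  have hd2 : G.dist a b = 2 := dist_two hG z hab ha hb hl
  set w := gmeet hG z a b with hw
  have h1 : G.dist a w + G.dist w b = G.dist a b := (gmed_spec hG a b z).1
  have h2 : G.dist b w + G.dist w z = G.dist b z := (gmed_spec hG a b z).2.1
  have h3 : G.dist z w + G.dist w a = G.dist z a := (gmed_spec hG a b z).2.2
  have hwa : w ≠ a := by
    intro h
    rw [h] at h2
    have c1 : G.dist b a = 2 := by rw [dist_comm']; exact hd2
    have c2 : G.dist a z = G.dist z a := dist_comm' G _ _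
    have c3 : G.dist b z = G.dist z b := dist_comm' G _ _
    omega
  have hwb : w ≠ b := by
    intro h
    rw [h] at h3
    have c1 : G.dist b a = 2 := by rw [dist_comm']; exact hd2
    omega
  have haw0 : G.dist a w ≠ 0 := fun h => hwa ((hG.1.dist_eq_zero_iff).mp h).symm
  have hwb0 : G.dist w b ≠ 0 := fun h => hwb ((hG.1.dist_eq_zero_iff).mp h)
  have haw1 : G.dist a w = 1 := by omega
  have hwb1 : G.dist w b = 1 := by omega
  have hwa1 : G.dist w a = 1 := by rw [dist_comm']; exact haw1
  refine ⟨SimpleGraph.dist_eq_one_iff_adj.mp haw1,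
    (SimpleGraph.dist_eq_one_iff_adj.mp hwb1).symm, by omega⟩

lemma two_medians (hG : MedianGraph G) {a b c x w : V}
    (dab : G.dist a b = 2) (dbc : G.dist b c = 2) (dac : G.dist a c = 2)
    (hxa : G.Adj x a) (hxb : G.Adj x b) (hxc : G.Adj x c)
    (hwa : G.Adj w a) (hwb : G.Adj w b) (hwc : G.Adj w c) : x = w := by
  have key : ∀ y : V, G.Adj y a → G.Adj y b → G.Adj y c → y = gmed hG a b c := by
    intro y h1 h2 h3
    apply gmed_eq hG
    have e1 : G.dist a y = 1 := SimpleGraph.dist_eq_one_iff_adj.mpr h1.symm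
    have e1' : G.dist y a = 1 := SimpleGraph.dist_eq_one_iff_adj.mpr h1
    have e2 : G.dist b y = 1 := SimpleGraph.dist_eq_one_iff_adj.mpr h2.symm
    have e2' : G.dist y b = 1 := SimpleGraph.dist_eq_one_iff_adj.mpr h2
    have e3 : G.dist c y = 1 := SimpleGraph.dist_eq_one_iff_adj.mpr h3.symm
    have e3' : G.dist y c = 1 := SimpleGraph.dist_eq_one_iff_adj.mpr h3
    have dca : G.dist c a = 2 := by rw [dist_comm']; exact dac
    refine ⟨?_, ?_, ?_⟩ <;> rw [mem_gInterval'] <;> omega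
  rw [key x hxa hxb hxc, key w hwa hwb hwc]

end MedianGraphLemmas

section Cube

variable {V : Type*} {G : SimpleGraph V}

/-- Iterated meet of the `u i`, `i ∈ A`, together with `v`. -/
noncomputable def cubef (hG : MedianGraph G) (z v : V) {k : ℕ} (u : Fin k → V)
    (A : Finset (Fin k)) : V :=
  @Finset.fold (Fin k) V (gmeet hG z) ⟨gmeet_comm hG z⟩ ⟨gmeet_assoc hG z⟩ v u A

lemma cubef_empty (hG : MedianGraph G) (z v : V) {k : ℕ} (u : Fin k → V) :
    cubef hG z v u ∅ = v :=
  @Finset.fold_empty (Fin k) V (gmeet hG z) ⟨gmeet_comm hG z⟩ ⟨gmeet_assoc hG z⟩ u v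

lemma cubef_insert (hG : MedianGraph G) (z v : V) {k : ℕ} (u : Fin k → V)
    {A : Finset (Fin k)} {i : Fin k} (h : i ∉ A) :
    cubef hG z v u (insert i A) = gmeet hG z (u i) (cubef hG z v u A) :=
  @Finset.fold_insert (Fin k) V (gmeet hG z) ⟨gmeet_comm hG z⟩ ⟨gmeet_assoc hG z⟩
    u v A i _ h

variable (hG : MedianGraph G) (z v : V) {k : ℕ} (u : Fin k → V)

lemma cube_main (hu : Function.Injective u) (hadj : ∀ i, G.Adj v (u i))
    (hlev : ∀ i, G.dist z (u i) + 1 = G.dist z v) :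
    ∀ A : Finset (Fin k),
      (G.dist z (cubef hG z v u A) + A.card = G.dist z v)
      ∧ (∀ i ∉ A, G.Adj (cubef hG z v u A) (gmeet hG z (cubef hG z v u A) (u i))
          ∧ G.dist z (gmeet hG z (cubef hG z v u A) (u i)) + 1
              = G.dist z (cubef hG z v u A))
      ∧ (∀ i ∉ A, ∀ j ∉ A, i ≠ j →
          gmeet hG z (cubef hG z v u A) (u i) ≠ gmeet hG z (cubef hG z v u A) (u j)) := by
  classical
  have hule : ∀ i, vle G z (u i) v := by
    intro i
    have h1 : G.dist (u i) v = 1 := SimpleGraph.dist_eq_one_iff_adj.mpr (hadj i).symm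
    unfold vle
    rw [h1]
    exact hlev i
  intro A
  induction A using Finset.induction_on with
  | empty =>
    rw [cubef_empty]
    have hmv : ∀ i : Fin k, gmeet hG z v (u i) = u i := by
      intro i
      rw [gmeet_comm]
      exact gmeet_eq_left hG (hule i)
    refine ⟨by simp, fun i _ => ?_, fun i _ j _ hij => ?_⟩
    · rw [hmv i]
      exact ⟨hadj i, hlev i⟩
    · rw [hmv i, hmv j]
      exact fun h => hij (hu h)
  | insert j A hjA IH =>
    set x := cubef hG z v u A with hx
    have hcx : cubef hG z v u (insert j A) = gmeet hG z x (u j) := by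
      rw [cubef_insert hG z v u hjA, gmeet_comm]
    set c := gmeet hG z x (u j) with hc
    have hlevx := IH.1
    have hdown := IH.2.1
    have hinj := IH.2.2
    have hcadj : G.Adj x c ∧ G.dist z c + 1 = G.dist z x := hdown j hjA
    -- the basic swap/absorption identities
    have hswap : ∀ p q : Fin k,
        gmeet hG z (gmeet hG z x (u p)) (u q) = gmeet hG z (gmeet hG z x (u q)) (u p) := by
      intro p q
      rw [gmeet_assoc, gmeet_comm hG z (u p) (u q), ← gmeet_assoc]
    have habs : ∀ p q : Fin k,
        gmeet hG z (gmeet hG z x (u p)) (gmeet hG z x (u q))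
          = gmeet hG z (gmeet hG z x (u q)) (u p) := by
      intro p q
      rw [gmeet_absorb hG (gmeet_le_left hG z x (u p)), hswap]
    rw [hcx]
    refine ⟨?_, ?_, ?_⟩
    · rw [Finset.card_insert_of_notMem hjA]
      omega
    · intro i hi
      have hij : i ≠ j := fun h => hi (h ▸ Finset.mem_insert_self i A)
      have hiA : i ∉ A := fun h => hi (Finset.mem_insert_of_mem h)
      have hadja : G.Adj x (gmeet hG z x (u i)) := (hdown i hiA).1
      have hleva : G.dist z (gmeet hG z x (u i)) + 1 = G.dist z x := (hdown i hiA).2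
      have hadjc : G.Adj x c := hcadj.1
      have hlevc : G.dist z c + 1 = G.dist z x := hcadj.2
      have hne : gmeet hG z x (u i) ≠ c := hinj i hiA j hjA hij
      -- downstep on the two distinct down-neighbours `x⊓uᵢ` and `c` of `x`
      have hstep := downstep hG z hne hadja hadjc hleva hlevc
      rw [habs i j] at hstep
      have hlev2 : G.dist z (gmeet hG z c (u i)) + 2 = G.dist z x := hstep.2.2
      exact ⟨hstep.2.1, by omega⟩
    · intro i hi i' hi' hii'
      have hij : i ≠ j := fun h => hi (h ▸ Finset.mem_insert_self i A)
      have hiA : i ∉ A := fun h => hi (Finset.mem_insert_of_mem h)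
      have hi'j : i' ≠ j := fun h => hi' (h ▸ Finset.mem_insert_self i' A)
      have hi'A : i' ∉ A := fun h => hi' (Finset.mem_insert_of_mem h)
      intro heq
      set a := gmeet hG z x (u i) with ha
      set b := gmeet hG z x (u i') with hb
      have hadja : G.Adj x a := (hdown i hiA).1
      have hleva : G.dist z a + 1 = G.dist z x := (hdown i hiA).2
      have hadjb : G.Adj x b := (hdown i' hi'A).1
      have hlevb : G.dist z b + 1 = G.dist z x := (hdown i' hi'A).2
      have hadjc : G.Adj x c := hcadj.1
      have hlevc : G.dist z c + 1 = G.dist z x := hcadj.2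
      have hac : a ≠ c := hinj i hiA j hjA hij
      have hbc : b ≠ c := hinj i' hi'A j hjA hi'j
      have hab : a ≠ b := hinj i hiA i' hi'A hii'
      -- y := a ⊓ c = c ⊓ uᵢ  equals  b ⊓ c = c ⊓ uᵢ'
      have hy1 : gmeet hG z a c = gmeet hG z c (u i) := habs i j
      have hy2 : gmeet hG z b c = gmeet hG z c (u i') := habs i' j
      have hyeq : gmeet hG z a c = gmeet hG z b c := by rw [hy1, hy2, heq]
      have hstep1 := downstep hG z hac hadja hadjc hleva hlevc
      have hstep2 := downstep hG z hbc hadjb hadjc hlevb hlevc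
      rw [← hyeq] at hstep2
      -- `a ⊓ c` is adjacent to a, b, c; x is adjacent to a, b, c; contradiction
      have dab : G.dist a b = 2 := dist_two hG z hab hadja hadjb (by omega)
      have dbc : G.dist b c = 2 := dist_two hG z hbc hadjb hadjc (by omega)
      have dac : G.dist a c = 2 := dist_two hG z hac hadja hadjc (by omega)
      have hxy : x = gmeet hG z a c :=
        two_medians hG dab dbc dac hadja hadjb hadjc
          hstep1.1.symm hstep2.1.symm hstep1.2.1.symm
      have hlev2 : G.dist z (gmeet hG z a c) + 2 = G.dist z x := hstep1.2.2
      rw [← hxy] at hlev2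
      omega

end Cube

section Cube2

variable {V : Type*} {G : SimpleGraph V} (hG : MedianGraph G) (z v : V) {k : ℕ}
  (u : Fin k → V)

lemma cubef_le : ∀ A : Finset (Fin k),
    vle G z (cubef hG z v u A) v ∧ ∀ i ∈ A, vle G z (cubef hG z v u A) (u i) := by
  classical
  intro A
  induction A using Finset.induction_on with
  | empty => rw [cubef_empty]; exact ⟨vle_refl z v, by simp⟩
  | insert j A hjA IH =>
    rw [cubef_insert hG z v u hjA]
    constructor
    · exact vle_trans hG (gmeet_le_right hG z (u j) _) IH.1
    · intro i hi
      rcases Finset.mem_insert.mp hi with h | h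
      · rw [h]; exact gmeet_le_left hG z (u j) _
      · exact vle_trans hG (gmeet_le_right hG z (u j) _) (IH.2 i h)

lemma cubef_union : ∀ A B : Finset (Fin k),
    cubef hG z v u (A ∪ B) = gmeet hG z (cubef hG z v u A) (cubef hG z v u B) := by
  classical
  intro A B
  induction B using Finset.induction_on with
  | empty =>
    rw [Finset.union_empty, cubef_empty, gmeet_eq_left hG (cubef_le hG z v u A).1]
  | insert i B hiB IH =>
    rw [cubef_insert hG z v u hiB]
    by_cases hiA : i ∈ A
    · have h1 : A ∪ insert i B = A ∪ B := by
        rw [Finset.union_insert, Finset.insert_eq_self.mpr (Finset.mem_union_left B hiA)]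
      rw [h1, IH, ← gmeet_assoc, gmeet_eq_left hG ((cubef_le hG z v u A).2 i hiA)]
    · have h1 : A ∪ insert i B = insert i (A ∪ B) := by
        rw [Finset.union_insert]
      have hiAB : i ∉ A ∪ B := by
        simp only [Finset.mem_union]
        tauto
      rw [h1, cubef_insert hG z v u hiAB, IH, gmeet_left_comm]

lemma cubef_dist (hu : Function.Injective u) (hadj : ∀ i, G.Adj v (u i))
    (hlev : ∀ i, G.dist z (u i) + 1 = G.dist z v) (A B : Finset (Fin k)) :
    G.dist (cubef hG z v u A) (cubef hG z v u B) = (symmDiff A B).card := by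
  classical
  set fA := cubef hG z v u A with hfA
  set fB := cubef hG z v u B with hfB
  set m := cubef hG z v u (A ∪ B) with hm
  have hmeet : gmeet hG z fA fB = m := (cubef_union hG z v u A B).symm
  have hint : G.dist fA m + G.dist m fB = G.dist fA fB := by
    rw [← hmeet]; exact gmeet_interval hG z fA fB
  have hlA : vle G z m fA := by rw [← hmeet]; exact gmeet_le_left hG z fA fB
  have hlB : vle G z m fB := by rw [← hmeet]; exact gmeet_le_right hG z fA fB
  have e1 : G.dist z fA + A.card = G.dist z v := (cube_main hG z v u hu hadj hlev A).1
  have e2 : G.dist z fB + B.card = G.dist z v := (cube_main hG z v u hu hadj hlev B).1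
  have e3 : G.dist z m + (A ∪ B).card = G.dist z v :=
    (cube_main hG z v u hu hadj hlev (A ∪ B)).1
  have hlA' : G.dist z m + G.dist m fA = G.dist z fA := hlA
  have hlB' : G.dist z m + G.dist m fB = G.dist z fB := hlB
  have hc1 : (A ∪ B).card + (A ∩ B).card = A.card + B.card :=
    Finset.card_union_add_card_inter A B
  have hc2 : (symmDiff A B).card = (A ∪ B).card - (A ∩ B).card := by
    rw [symmDiff_eq_sup_sdiff_inf]
    exact Finset.card_sdiff_of_subset (Finset.inter_subset_union)
  have hcc : G.dist fA m = G.dist m fA := dist_comm' G _ _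
  omega

lemma down_cube {Vx : Type*} {Gx : SimpleGraph Vx} (hGx : MedianGraph Gx) (zx vx : Vx)
    {kx : ℕ} (ux : Fin kx → Vx) (hu : Function.Injective ux)
    (hadj : ∀ i, Gx.Adj vx (ux i))
    (hlev : ∀ i, Gx.dist zx (ux i) + 1 = Gx.dist zx vx) : HasInducedCube Gx kx := by
  refine ⟨cubef hGx zx vx ux, ?_, fun A => Set.mem_univ _, ?_⟩
  · intro A B hAB
    have h := cubef_dist hGx zx vx ux hu hadj hlev A B
    rw [hAB] at h
    have h0 : Gx.dist (cubef hGx zx vx ux B) (cubef hGx zx vx ux B) = 0 := by simp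
    rw [h0] at h
    have : symmDiff A B = ∅ := Finset.card_eq_zero.mp h.symm
    exact symmDiff_eq_bot.mp this
  · intro A B
    rw [← SimpleGraph.dist_eq_one_iff_adj, cubef_dist hGx zx vx ux hu hadj hlev A B]

end Cube2

section Counting

lemma card_pairs {α : Type*} [Fintype α] (P : α → α → Prop) [∀ x y, Decidable (P x y)] :
    ((Finset.univ ×ˢ Finset.univ).filter (fun p : α × α => P p.1 p.2)).card
      = ∑ x, (Finset.univ.filter (fun y => P x y)).card := by
  classical
  rw [Finset.card_eq_sum_card_fiberwise
    (f := fun p : α × α => p.1) (t := Finset.univ) (fun p _ => Finset.mem_univ _)]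
  apply Finset.sum_congr rfl
  intro x _
  apply Finset.card_bij (fun p _ => p.2)
  · intro p hp
    simp only [Finset.mem_filter, Finset.mem_univ, true_and] at hp ⊢
    rcases hp with ⟨h1, h2⟩
    rw [← h2]
    exact h1.2
  · intro p hp q hq h
    simp only [Finset.mem_filter] at hp hq
    exact Prod.ext (hp.2.trans hq.2.symm) h
  · intro y hy
    simp only [Finset.mem_filter, Finset.mem_univ, true_and] at hy
    exact ⟨(x, y), by simp [hy], rfl⟩

lemma card_pairs_swap {α : Type*} [Fintype α] (P : α → α → Prop) [∀ x y, Decidable (P x y)] :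
    ((Finset.univ ×ˢ Finset.univ).filter (fun p : α × α => P p.1 p.2)).card
      = ((Finset.univ ×ˢ Finset.univ).filter (fun p : α × α => P p.2 p.1)).card := by
  apply Finset.card_bij (fun p _ => p.swap)
  · intro p hp
    simp only [Finset.mem_filter, Finset.mem_univ, Finset.mem_product, true_and,
      and_true] at hp ⊢
    exact hp
  · intro p hp q hq h
    exact Prod.swap_injective h
  · intro q hq
    simp only [Finset.mem_filter, Finset.mem_univ, Finset.mem_product, true_and,
      and_true] at hq ⊢
    exact ⟨q.swap, hq, by simp⟩

lemma hasInducedCube_mono {V : Type*} {G : SimpleGraph V} {d : ℕ}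
    (h : HasInducedCube G d) {k : ℕ} (hk : k ≤ d) : HasInducedCube G k := by
  obtain ⟨f, hf, -, hadj⟩ := h
  classical
  let e : Fin k ↪ Fin d := Fin.castLEEmb hk
  have hsymm : ∀ A B : Finset (Fin k),
      symmDiff (Finset.map e A) (Finset.map e B) = Finset.map e (symmDiff A B) := by
    intro A B
    ext x
    simp only [Finset.mem_symmDiff, Finset.mem_map]
    constructor
    · rintro (⟨⟨a, ha, rfl⟩, hnb⟩ | ⟨⟨a, ha, rfl⟩, hnb⟩)
      · exact ⟨a, Or.inl ⟨ha, fun hb => hnb ⟨a, hb, rfl⟩⟩, rfl⟩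
      · exact ⟨a, Or.inr ⟨ha, fun hb => hnb ⟨a, hb, rfl⟩⟩, rfl⟩
    · rintro ⟨a, ha | ha, rfl⟩
      · exact Or.inl ⟨⟨a, ha.1, rfl⟩, fun ⟨b, hb, hba⟩ => ha.2 (e.injective hba ▸ hb)⟩
      · exact Or.inr ⟨⟨a, ha.1, rfl⟩, fun ⟨b, hb, hba⟩ => ha.2 (e.injective hba ▸ hb)⟩
  refine ⟨fun A => f (A.map e), fun A B hAB => ?_, fun A => Set.mem_univ _, fun A B => ?_⟩
  · exact Finset.map_injective e (hf hAB)
  · rw [hadj, hsymm, Finset.card_map]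

end Counting


/-- Edge bound for median graphs: a finite median graph with `n` vertices, `m` edges
and dimension `d` satisfies `m ≤ d·n`, and `d·n ≤ n·log₂ n` for `n ≥ 2`; in
particular `m ≤ 2n` when the graph is cube-free. -/
theorem median_edge_bound (V : Type*) [Fintype V] (G : SimpleGraph V)
    [Fintype G.edgeSet] (hG : MedianGraph G) (d : ℕ)
    (hd : HasInducedCube G d) (hmax : ∀ d' : ℕ, HasInducedCube G d' → d' ≤ d) :
    G.edgeFinset.card ≤ d * Fintype.card V ∧
    (2 ≤ Fintype.card V →
      d * Fintype.card V ≤ Fintype.card V * Nat.log 2 (Fintype.card V)) ∧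
    (CubeFree G → G.edgeFinset.card ≤ 2 * Fintype.card V) := by

  classical
  obtain ⟨z⟩ := hG.1.nonempty
  set D : V → Finset V :=
    fun x => Finset.univ.filter (fun y => G.Adj x y ∧ G.dist z y + 1 = G.dist z x) with hD
  set U : V → Finset V :=
    fun x => Finset.univ.filter (fun y => G.Adj x y ∧ G.dist z x + 1 = G.dist z y) with hU
  have hDle : ∀ x, (D x).card ≤ d := by
    intro x
    have hcube : HasInducedCube G ((D x).card) := by
      set s := D x with hs
      refine down_cube hG z x (fun i => ((s.equivFin.symm i : s) : V)) ?_ ?_ ?_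
      · intro i j hij
        exact s.equivFin.symm.injective (Subtype.ext hij)
      · intro i
        have hm : ((s.equivFin.symm i : s) : V) ∈ Finset.univ.filter
            (fun y => G.Adj x y ∧ G.dist z y + 1 = G.dist z x) := (s.equivFin.symm i).2
        exact (Finset.mem_filter.mp hm).2.1
      · intro i
        have hm : ((s.equivFin.symm i : s) : V) ∈ Finset.univ.filter
            (fun y => G.Adj x y ∧ G.dist z y + 1 = G.dist z x) := (s.equivFin.symm i).2
        exact (Finset.mem_filter.mp hm).2.2
    exact hmax _ hcube
  have hdeg : ∀ x, G.degree x = (D x).card + (U x).card := by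
    intro x
    have hsplit : G.neighborFinset x = D x ∪ U x := by
      ext y
      simp only [SimpleGraph.mem_neighborFinset, Finset.mem_union, hD, hU,
        Finset.mem_filter, Finset.mem_univ, true_and]
      constructor
      · intro h
        exact (adj_vert hG z h).elim (fun hl => Or.inr ⟨h, hl⟩) (fun hl => Or.inl ⟨h, hl⟩)
      · rintro (⟨h, -⟩ | ⟨h, -⟩) <;> exact h
    have hdisj : Disjoint (D x) (U x) := by
      rw [Finset.disjoint_left]
      intro y hy1 hy2
      rw [hD] at hy1
      rw [hU] at hy2
      have h1 := (Finset.mem_filter.mp hy1).2.2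
      have h2 := (Finset.mem_filter.mp hy2).2.2
      omega
    rw [← SimpleGraph.card_neighborFinset_eq_degree, hsplit,
      Finset.card_union_of_disjoint hdisj]
  have hTD : ∑ x, (D x).card
      = ((Finset.univ ×ˢ Finset.univ).filter
          (fun p : V × V => G.Adj p.1 p.2 ∧ G.dist z p.2 + 1 = G.dist z p.1)).card := by
    rw [card_pairs (fun x y => G.Adj x y ∧ G.dist z y + 1 = G.dist z x)]
  have hTU : ∑ x, (U x).card
      = ((Finset.univ ×ˢ Finset.univ).filter
          (fun p : V × V => G.Adj p.2 p.1 ∧ G.dist z p.1 + 1 = G.dist z p.2)).card := by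
    rw [card_pairs (fun x y => G.Adj y x ∧ G.dist z x + 1 = G.dist z y)]
    apply Finset.sum_congr rfl
    intro x _
    congr 1
    ext y
    simp only [hU, Finset.mem_filter, Finset.mem_univ, true_and]
    rw [G.adj_comm]
  have hswap : ((Finset.univ ×ˢ Finset.univ).filter
        (fun p : V × V => G.Adj p.1 p.2 ∧ G.dist z p.2 + 1 = G.dist z p.1)).card
      = ((Finset.univ ×ˢ Finset.univ).filter
        (fun p : V × V => G.Adj p.2 p.1 ∧ G.dist z p.1 + 1 = G.dist z p.2)).card :=
    card_pairs_swap (fun x y => G.Adj x y ∧ G.dist z y + 1 = G.dist z x)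
  have hsum : ∑ x, G.degree x = 2 * G.edgeFinset.card := by
    rw [show G.edgeFinset = @SimpleGraph.edgeFinset V G G.fintypeEdgeSet by congr!]
    exact SimpleGraph.sum_degrees_eq_twice_card_edges G
  have hsum2 : ∑ x, G.degree x = ∑ x, (D x).card + ∑ x, (U x).card := by
    rw [← Finset.sum_add_distrib]
    exact Finset.sum_congr rfl (fun x _ => hdeg x)
  have hm : G.edgeFinset.card = ∑ x, (D x).card := by omega
  have main : G.edgeFinset.card ≤ d * Fintype.card V := by
    rw [hm]
    calc ∑ x, (D x).card ≤ ∑ _x : V, d := Finset.sum_le_sum (fun x _ => hDle x)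
    _ = Fintype.card V * d := by rw [Finset.sum_const, Finset.card_univ, smul_eq_mul]
    _ = d * Fintype.card V := Nat.mul_comm _ _
  refine ⟨main, ?_, ?_⟩
  · intro h2
    obtain ⟨f, hf, -, -⟩ := hd
    have h1 : 2 ^ d ≤ Fintype.card V := by
      calc 2 ^ d = Fintype.card (Finset (Fin d)) := by
            rw [Fintype.card_finset, Fintype.card_fin]
      _ ≤ Fintype.card V := Fintype.card_le_of_injective f hf
    have hlog : d ≤ Nat.log 2 (Fintype.card V) :=
      (Nat.le_log_iff_pow_le (by norm_num) (by omega)).mpr h1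
    calc d * Fintype.card V = Fintype.card V * d := Nat.mul_comm _ _
    _ ≤ Fintype.card V * Nat.log 2 (Fintype.card V) := Nat.mul_le_mul_left _ hlog
  · intro hcf
    have hd2 : d ≤ 2 := by
      by_contra h
      exact hcf (hasInducedCube_mono hd (by omega))
    exact main.trans (Nat.mul_le_mul_right _ hd2)
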